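/- Let V be a finite-dimensional real vector space equipped with data (γ, ℓ, ℓ⁽²⁾, P, n, n⁽²⁾) satisfying the four contraction identities, and assume n⁽²⁾ = 0. Then n ≠ 0 and the radical of γ equals the line spanned by n: Rad γ = span{n}. In particular γ(n,·) = 0 and ℓ(n) = 1. -/
import Mathlib


open Module

/-- The vector of `V` corresponding to `P(ρ,·) ∈ V**`, via the canonical
identification `V ≅ V**`. -/
noncomputable def Pvec {V : Type*} [AddCommGroup V] [Module ℝ V] [FiniteDimensional ℝ V]
    (P : LinearMap.BilinForm ℝ (Module.Dual ℝ V)) (ρ : Module.Dual ℝ V) : V :=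
  (Module.evalEquiv ℝ V).symm (P ρ)

/-- For hypersurface data with `n⁽²⁾ = 0`: `n ≠ 0`, the radical of `γ` is the line
spanned by `n`, `γ(n,·) = 0` and `ℓ(n) = 1`. -/
theorem radical_eq_span_n {V : Type*} [AddCommGroup V] [Module ℝ V]
    [FiniteDimensional ℝ V]
    (γ : LinearMap.BilinForm ℝ V) (hγsym : ∀ X Y : V, γ X Y = γ Y X)
    (ℓ : Module.Dual ℝ V) (ℓ2 : ℝ)
    (P : LinearMap.BilinForm ℝ (Module.Dual ℝ V)) (hPsym : ∀ α β, P α β = P β α)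
    (n : V) (n2 : ℝ) (hn2 : n2 = 0)
    (h1 : γ n + n2 • ℓ = 0)
    (h2 : ℓ n + n2 * ℓ2 = 1)
    (h3 : Pvec P ℓ + ℓ2 • n = 0)
    (h4 : ∀ X : V, Pvec P (γ X) + ℓ X • n = X) :
    n ≠ 0 ∧ LinearMap.ker γ = Submodule.span ℝ {n} ∧ γ n = 0 ∧ ℓ n = 1 := by
  subst hn2
  simp only [zero_smul, add_zero, zero_mul] at h1 h2
  have hℓn : ℓ n = 1 := h2
  have hn : n ≠ 0 := by
    intro h
    rw [h, map_zero] at hℓn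
    norm_num at hℓn
  refine ⟨hn, ?_, h1, hℓn⟩
  apply le_antisymm
  · intro X hX
    have hγX : γ X = 0 := hX
    have := h4 X
    rw [hγX] at this
    have hz : Pvec P 0 = 0 := by
      rw [Pvec, map_zero]; exact LinearEquiv.map_zero _
    rw [hz, zero_add] at this
    rw [← this]
    exact Submodule.smul_mem _ _ (Submodule.mem_span_singleton_self n)
  · rw [Submodule.span_le, Set.singleton_subset_iff]
    exact h1
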